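/- Let 1 ≤ M ≤ N-1 and let G be the generator of a birth-and-death chain on {0,...,N} with birth rates b_1,...,b_N > 0, death rates d_1,...,d_M > 0 and d_{M+1} = ... = d_N = 0. Then there exists a stochastic matrix K on {0,...,N} with K(x,{0,...,x}) = 1 for all x and K(x,x) = 1 for M+1 ≤ x ≤ N, and a generator G' of a birth-and-death chain on {0,...,N} with birth rates b'_1,...,b'_N > 0 and death rates d'_1,...,d'_{M-1} > 0, d'_M = ... = d'_N = 0, such that KG = G'K. -/

import Mathlib

open Matrix Polynomial Finset

/-- Generator of a birth-and-death chain on `{0,...,N}`: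
`Gf(x) = b_{x+1}(f(x+1)-f(x)) + d_x(f(x-1)-f(x))`, with the conventions
`b_{N+1} = 0` (built in via the `if x < N` in the diagonal term; there is no
state `N+1`) and `d 0 = 0` (imposed as a hypothesis in the theorems). -/
def bdGen (N : ℕ) (b d : ℕ → ℝ) : Matrix (Fin (N+1)) (Fin (N+1)) ℝ :=
  Matrix.of fun x y =>
    if (y : ℕ) = (x : ℕ) + 1 then b ((x : ℕ) + 1)
    else if (y : ℕ) + 1 = (x : ℕ) then d (x : ℕ)
    else if y = x then -((if (x : ℕ) < N then b ((x : ℕ) + 1) else 0) + d (x : ℕ))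
    else 0

/-- auxiliary recursion: `(v x, V x)` where `V` is the partial sum of `v`. -/
noncomputable def stmt6Aux (b d : ℕ → ℝ) (l : ℝ) : ℕ → ℝ × ℝ
  | 0 => (1, 1)
  | x+1 =>
    let p := stmt6Aux b d l x
    let w := (p.1 * b (x+1) - l * p.2) / d (x+1)
    (w, p.2 + w)

noncomputable def stmt6v (b d : ℕ → ℝ) (l : ℝ) (x : ℕ) : ℝ := (stmt6Aux b d l x).1
noncomputable def stmt6V (b d : ℕ → ℝ) (l : ℝ) (x : ℕ) : ℝ := (stmt6Aux b d l x).2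

lemma stmt6v_zero (b d : ℕ → ℝ) (l : ℝ) : stmt6v b d l 0 = 1 := rfl
lemma stmt6V_zero (b d : ℕ → ℝ) (l : ℝ) : stmt6V b d l 0 = 1 := rfl
lemma stmt6v_succ (b d : ℕ → ℝ) (l : ℝ) (x : ℕ) :
    stmt6v b d l (x+1) = (stmt6v b d l x * b (x+1) - l * stmt6V b d l x) / d (x+1) := rfl
lemma stmt6V_succ (b d : ℕ → ℝ) (l : ℝ) (x : ℕ) :
    stmt6V b d l (x+1) = stmt6V b d l x + stmt6v b d l (x+1) := rfl

lemma stmt6_cont (b d : ℕ → ℝ) (x : ℕ) :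
    Continuous (fun l => stmt6v b d l x) ∧ Continuous (fun l => stmt6V b d l x) := by
  induction x with
  | zero => exact ⟨continuous_const, continuous_const⟩
  | succ n ih =>
    have h1 : Continuous (fun l => stmt6v b d l (n+1)) := by
      simp only [stmt6v_succ]
      exact ((ih.1.mul continuous_const).sub (continuous_id.mul ih.2)).div_const _
    exact ⟨h1, by simp only [stmt6V_succ]; exact ih.2.add h1⟩

lemma stmt6_exists_lam (M : ℕ) (hM : 1 ≤ M) (b d : ℕ → ℝ)
    (hb : ∀ x, 1 ≤ x → x ≤ M + 1 → 0 < b x) (hd : ∀ x, 1 ≤ x → x ≤ M → 0 < d x) :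
    ∃ lam : ℝ, 0 < lam ∧ (∀ x, x ≤ M → 0 < stmt6v b d lam x) ∧
      stmt6v b d lam M * b (M+1) = lam * stmt6V b d lam M := by
  set φ : ℝ → ℝ := fun l => stmt6v b d l M * b (M+1) - l * stmt6V b d l M with hφ
  have hφcont : Continuous φ :=
    ((stmt6_cont b d M).1.mul continuous_const).sub (continuous_id.mul (stmt6_cont b d M).2)
  set U : Set ℝ := {l | 0 < φ l ∧ ∀ x, x ≤ M → 0 < stmt6v b d l x} with hU
  have hUopen : IsOpen U := by
    have : U = {l | 0 < φ l} ∩ ⋂ x ∈ Set.Iic M, {l | 0 < stmt6v b d l x} := by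
      ext l; simp [hU, Set.mem_iInter]
    rw [this]
    exact (isOpen_lt continuous_const hφcont).inter
      ((Set.finite_Iic M).isOpen_biInter fun x _ => isOpen_lt continuous_const (stmt6_cont b d x).1)
  -- positivity at l = 0
  have hpos0 : ∀ x, x ≤ M → 0 < stmt6v b d 0 x := by
    intro x
    induction x with
    | zero => intro _; rw [stmt6v_zero]; norm_num
    | succ n ih =>
      intro h
      rw [stmt6v_succ]
      have hn := ih (by omega)
      have : stmt6v b d 0 n * b (n+1) - 0 * stmt6V b d 0 n = stmt6v b d 0 n * b (n+1) := by ring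
      rw [this]
      exact div_pos (mul_pos hn (hb _ (by omega) (by omega))) (hd _ (by omega) h)
  have hP0 : (0:ℝ) ∈ U := by
    refine ⟨?_, hpos0⟩
    have : φ 0 = stmt6v b d 0 M * b (M+1) := by simp [hφ]
    rw [this]
    exact mul_pos (hpos0 M le_rfl) (hb _ (by omega) (by omega))
  set S : Set ℝ := Set.Ici 0 ∩ Uᶜ with hS
  have hSclosed : IsClosed S := isClosed_Ici.inter hUopen.isClosed_compl
  have hSne : b 1 ∈ S := by
    constructor
    · exact (hb 1 le_rfl (by omega)).le
    · intro hmem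
      have h1 : stmt6v b d (b 1) 1 = 0 := by
        rw [stmt6v_succ, stmt6v_zero, stmt6V_zero]
        simp
      have := hmem.2 1 hM
      rw [h1] at this; exact lt_irrefl 0 this
  have hSbdd : BddBelow S := ⟨0, fun l hl => hl.1⟩
  set lam := sInf S with hlam
  have hlamS : lam ∈ S := hSclosed.csInf_mem ⟨_, hSne⟩ hSbdd
  have hlampos : 0 < lam := by
    rcases lt_or_eq_of_le (Set.mem_Ici.mp hlamS.1) with h | h
    · exact h
    · exact absurd hP0 (h ▸ hlamS.2)
  have hlow : ∀ l, 0 ≤ l → l < lam → l ∈ U := by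
    intro l h0 hl
    by_contra hc
    exact absurd (csInf_le hSbdd ⟨h0, hc⟩) (not_le.2 hl)
  have key : ∀ f : ℝ → ℝ, Continuous f → (∀ l, 0 ≤ l → l < lam → 0 < f l) → 0 ≤ f lam := by
    intro f hf hpos
    have h1 : Set.Ico (0:ℝ) lam ⊆ {l | 0 ≤ f l} := fun l hl => (hpos l hl.1 hl.2).le
    have h2 : closure (Set.Ico (0:ℝ) lam) ⊆ {l | 0 ≤ f l} :=
      (IsClosed.closure_subset_iff (isClosed_le continuous_const hf)).2 h1
    have h3 : lam ∈ closure (Set.Ico (0:ℝ) lam) := by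
      rw [closure_Ico (ne_of_lt hlampos)]
      exact ⟨hlampos.le, le_rfl⟩
    exact h2 h3
  have hφge : 0 ≤ φ lam := key φ hφcont (fun l h0 hl => (hlow l h0 hl).1)
  have hvge : ∀ x, x ≤ M → 0 ≤ stmt6v b d lam x := by
    intro x hx
    exact key _ (stmt6_cont b d x).1 (fun l h0 hl => (hlow l h0 hl).2 x hx)
  have hVpos : ∀ x, x ≤ M → 0 < stmt6V b d lam x := by
    intro x
    induction x with
    | zero => intro _; rw [stmt6V_zero]; norm_num
    | succ n ih =>
      intro h
      rw [stmt6V_succ]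
      have := hvge (n+1) h
      have := ih (by omega)
      linarith
  have hvpos : ∀ x, x ≤ M → 0 < stmt6v b d lam x := by
    intro x
    induction x with
    | zero => intro _; rw [stmt6v_zero]; norm_num
    | succ n ih =>
      intro h
      rcases lt_or_eq_of_le (hvge (n+1) h) with hp | hp
      · exact hp
      -- v (n+1) = 0 : derive a contradiction
      exfalso
      have hVn1 : 0 < stmt6V b d lam (n+1) := hVpos (n+1) h
      rcases lt_or_eq_of_le h with hlt | heq
      · -- n+2 ≤ M : v (n+2) < 0
        have h2 : n+2 ≤ M := by omega
        have : stmt6v b d lam (n+2) < 0 := by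
          rw [stmt6v_succ, ← hp]
          have hnum : (0:ℝ) * b (n+2) - lam * stmt6V b d lam (n+1) < 0 := by
            have := mul_pos hlampos hVn1; linarith
          exact div_neg_of_neg_of_pos hnum (hd _ (by omega) h2)
        exact absurd (hvge (n+2) h2) (not_le.2 this)
      · -- n+1 = M : φ lam < 0
        have : φ lam < 0 := by
          have : φ lam = stmt6v b d lam M * b (M+1) - lam * stmt6V b d lam M := rfl
          rw [this, ← heq, ← hp]
          have := mul_pos hlampos hVn1; linarith
        linarith
  have hφ0 : φ lam = 0 := by
    have hnotU : lam ∉ U := hlamS.2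
    have : ¬ (0 < φ lam) := by
      intro hc; exact hnotU ⟨hc, hvpos⟩
    linarith
  refine ⟨lam, hlampos, hvpos, ?_⟩
  have : stmt6v b d lam M * b (M+1) - lam * stmt6V b d lam M = 0 := hφ0
  linarith

/-- ℕ-level version of `bdGen`. -/
def stmt6g (N : ℕ) (b d : ℕ → ℝ) (x y : ℕ) : ℝ :=
  if y = x + 1 then b (x + 1)
  else if y + 1 = x then d x
  else if y = x then -((if x < N then b (x + 1) else 0) + d x)
  else 0

lemma bdGen_eq (N : ℕ) (b d : ℕ → ℝ) (x y : Fin (N+1)) :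
    bdGen N b d x y = stmt6g N b d (x : ℕ) (y : ℕ) := by
  simp only [bdGen, stmt6g, Matrix.of_apply, Fin.ext_iff]

lemma stmt6g_row_sum (N : ℕ) (b d : ℕ → ℝ) (f : ℕ → ℝ) (y : ℕ) (hy : y ≤ N) :
    ∑ i ∈ Finset.range (N+1), f i * stmt6g N b d i y
    = (if 1 ≤ y then f (y-1) * b y else 0) + (if y + 1 ≤ N then f (y+1) * d (y+1) else 0)
      + f y * (-((if y < N then b (y+1) else 0) + d y)) := by
  have hsplit : ∀ i, f i * stmt6g N b d i y
      = (if 1 ≤ y ∧ i = y - 1 then f (y-1) * b y else 0)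
        + (if i = y + 1 then f (y+1) * d (y+1) else 0)
        + (if i = y then f y * (-((if y < N then b (y+1) else 0) + d y)) else 0) := by
    intro i
    unfold stmt6g
    by_cases c1 : y = i + 1
    · rw [if_pos c1, if_pos (show 1 ≤ y ∧ i = y - 1 by omega),
        if_neg (show ¬ i = y + 1 by omega), if_neg (show ¬ i = y by omega)]
      have e1 : y - 1 = i := by omega
      rw [e1, c1]; ring
    · rw [if_neg c1, if_neg (show ¬ (1 ≤ y ∧ i = y - 1) by omega)]
      by_cases c2 : y + 1 = i
      · rw [if_pos c2, if_pos (show i = y + 1 by omega), if_neg (show ¬ i = y by omega), ← c2]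
        ring
      · rw [if_neg c2, if_neg (show ¬ i = y + 1 by omega)]
        by_cases c3 : y = i
        · rw [if_pos c3, if_pos (show i = y by omega), c3]; ring
        · rw [if_neg c3, if_neg (show ¬ i = y by omega)]; ring
  rw [Finset.sum_congr rfl (fun i _ => hsplit i), Finset.sum_add_distrib, Finset.sum_add_distrib]
  congr 1
  congr 1
  · by_cases h1 : 1 ≤ y
    · have he : ∀ i, (if 1 ≤ y ∧ i = y - 1 then f (y-1) * b y else 0)
          = (if i = y - 1 then f (y-1) * b y else 0) := by
        intro i
        by_cases h : i = y - 1
        · rw [if_pos ⟨h1, h⟩, if_pos h]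
        · rw [if_neg (fun hc => h hc.2), if_neg h]
      rw [Finset.sum_congr rfl (fun i _ => he i), Finset.sum_ite_eq' (Finset.range (N+1)),
        if_pos (by simp only [Finset.mem_range]; omega), if_pos h1]
    · have he : ∀ i, (if 1 ≤ y ∧ i = y - 1 then f (y-1) * b y else 0) = 0 := by
        intro i; rw [if_neg (fun hc => h1 hc.1)]
      rw [Finset.sum_congr rfl (fun i _ => he i), Finset.sum_const_zero, if_neg h1]
  · rw [Finset.sum_ite_eq' (Finset.range (N+1))]
    by_cases h : y + 1 ≤ N
    · rw [if_pos (by simp only [Finset.mem_range]; omega), if_pos h]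
    · rw [if_neg (by simp only [Finset.mem_range]; omega), if_neg h]
  · rw [Finset.sum_ite_eq' (Finset.range (N+1)), if_pos (by simp only [Finset.mem_range]; omega)]

lemma stmt6g_col_sum (N : ℕ) (b d : ℕ → ℝ) (f : ℕ → ℝ) (x : ℕ) (hx : x ≤ N) :
    ∑ i ∈ Finset.range (N+1), stmt6g N b d x i * f i
    = (if x + 1 ≤ N then b (x+1) * f (x+1) else 0) + (if 1 ≤ x then d x * f (x-1) else 0)
      + (-((if x < N then b (x+1) else 0) + d x)) * f x := by
  have hsplit : ∀ i, stmt6g N b d x i * f i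
      = (if i = x + 1 then b (x+1) * f (x+1) else 0)
        + (if 1 ≤ x ∧ i = x - 1 then d x * f (x-1) else 0)
        + (if i = x then (-((if x < N then b (x+1) else 0) + d x)) * f x else 0) := by
    intro i
    unfold stmt6g
    by_cases c1 : i = x + 1
    · rw [if_pos c1, if_pos c1, if_neg (show ¬ (1 ≤ x ∧ i = x - 1) by omega),
        if_neg (show ¬ i = x by omega), c1]
      ring
    · rw [if_neg c1, if_neg c1]
      by_cases c2 : i + 1 = x
      · rw [if_pos c2, if_pos (show 1 ≤ x ∧ i = x - 1 by omega),
          if_neg (show ¬ i = x by omega)]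
        have e1 : x - 1 = i := by omega
        rw [e1]; ring
      · rw [if_neg c2, if_neg (show ¬ (1 ≤ x ∧ i = x - 1) by omega)]
        by_cases c3 : i = x
        · rw [if_pos c3, if_pos c3, c3]; ring
        · rw [if_neg c3, if_neg c3]; ring
  rw [Finset.sum_congr rfl (fun i _ => hsplit i), Finset.sum_add_distrib, Finset.sum_add_distrib]
  congr 1
  congr 1
  · rw [Finset.sum_ite_eq' (Finset.range (N+1))]
    by_cases h : x + 1 ≤ N
    · rw [if_pos (by simp only [Finset.mem_range]; omega), if_pos h]
    · rw [if_neg (by simp only [Finset.mem_range]; omega), if_neg h]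
  · by_cases h1 : 1 ≤ x
    · have he : ∀ i, (if 1 ≤ x ∧ i = x - 1 then d x * f (x-1) else 0)
          = (if i = x - 1 then d x * f (x-1) else 0) := by
        intro i
        by_cases h : i = x - 1
        · rw [if_pos ⟨h1, h⟩, if_pos h]
        · rw [if_neg (fun hc => h hc.2), if_neg h]
      rw [Finset.sum_congr rfl (fun i _ => he i), Finset.sum_ite_eq' (Finset.range (N+1)),
        if_pos (by simp only [Finset.mem_range]; omega), if_pos h1]
    · have he : ∀ i, (if 1 ≤ x ∧ i = x - 1 then d x * f (x-1) else 0) = 0 := by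
        intro i; rw [if_neg (fun hc => h1 hc.1)]
      rw [Finset.sum_congr rfl (fun i _ => he i), Finset.sum_const_zero, if_neg h1]
  · rw [Finset.sum_ite_eq' (Finset.range (N+1)), if_pos (by simp only [Finset.mem_range]; omega)]

noncomputable def stmt6k (M : ℕ) (v V : ℕ → ℝ) (x y : ℕ) : ℝ :=
  if x ≤ M then (if y ≤ x then v y / V x else 0) else if y = x then 1 else 0

noncomputable def stmt6b' (M : ℕ) (lam : ℝ) (b : ℕ → ℝ) (v V : ℕ → ℝ) (x : ℕ) : ℝ :=
  if x ≤ M then v (x-1) * b x * V x / (v x * V (x-1)) else if x = M+1 then lam else b x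

noncomputable def stmt6d' (M : ℕ) (d : ℕ → ℝ) (v V : ℕ → ℝ) (x : ℕ) : ℝ :=
  if 1 ≤ x ∧ x + 1 ≤ M then V (x-1) * v (x+1) * d (x+1) / (v x * V x) else 0

lemma stmt6_eig (M : ℕ) (hM : 1 ≤ M) (b d : ℕ → ℝ) (lam : ℝ) (v V : ℕ → ℝ)
    (hv0 : v 0 = 1) (hV0 : V 0 = 1) (hVs : ∀ x, V (x+1) = V x + v (x+1))
    (hrec : ∀ x, x + 1 ≤ M → v (x+1) * d (x+1) = v x * b (x+1) - lam * V x)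
    (hP4 : v M * b (M+1) = lam * V M) (hd0 : d 0 = 0) :
    ∀ y, y ≤ M → (if 1 ≤ y then v (y-1) * b y else 0)
      + (if y + 1 ≤ M then v (y+1) * d (y+1) else 0) - v y * (b (y+1) + d y)
      = -(lam * v y) := by
  intro y hyM
  rcases Nat.eq_zero_or_pos y with rfl | hy1
  · rw [if_neg (by omega), if_pos (by omega : 0 + 1 ≤ M)]
    have h0 := hrec 0 hM
    rw [hv0, hV0] at h0
    rw [hd0, hv0]
    linarith
  · obtain ⟨m, rfl⟩ : ∃ m, y = m + 1 := ⟨y - 1, by omega⟩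
    rw [if_pos (by omega : 1 ≤ m + 1), Nat.add_sub_cancel]
    have h1 := hrec m (by omega)
    by_cases h2 : m + 1 + 1 ≤ M
    · rw [if_pos h2]
      have h3 := hrec (m+1) h2
      have h4 := hVs m
      linear_combination h3 - h1 - lam * h4
    · have hEq : m + 1 = M := by omega
      rw [if_neg h2]
      subst hEq
      have h4 := hVs m
      linear_combination -h1 - hP4 - lam * h4


set_option maxHeartbeats 1000000 in
lemma stmt6_key (N M : ℕ) (hM : 1 ≤ M) (hMN : M + 1 ≤ N) (b d : ℕ → ℝ) (lam : ℝ) (v V : ℕ → ℝ)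
    (hv0 : v 0 = 1) (hV0 : V 0 = 1) (hVs : ∀ x, V (x+1) = V x + v (x+1))
    (hrec : ∀ x, x + 1 ≤ M → v (x+1) * d (x+1) = v x * b (x+1) - lam * V x)
    (hP4 : v M * b (M+1) = lam * V M)
    (hvpos : ∀ x, x ≤ M → 0 < v x) (hVpos : ∀ x, x ≤ M → 0 < V x)
    (hdz : ∀ x, M + 1 ≤ x → d x = 0) (hd0 : d 0 = 0)
    (x y : ℕ) (hx : x ≤ N) (hy : y ≤ N) :
    (if 1 ≤ y then stmt6k M v V x (y-1) * b y else 0)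
      + (if y + 1 ≤ N then stmt6k M v V x (y+1) * d (y+1) else 0)
      + stmt6k M v V x y * (-((if y < N then b (y+1) else 0) + d y))
    = (if x + 1 ≤ N then stmt6b' M lam b v V (x+1) * stmt6k M v V (x+1) y else 0)
      + (if 1 ≤ x then stmt6d' M d v V x * stmt6k M v V (x-1) y else 0)
      + (-((if x < N then stmt6b' M lam b v V (x+1) else 0) + stmt6d' M d v V x))
        * stmt6k M v V x y := by
  have hkle : ∀ a c : ℕ, a ≤ M → c ≤ a → stmt6k M v V a c = v c / V a := by
    intro a c h1 h2; unfold stmt6k; rw [if_pos h1, if_pos h2]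
  have hkgt : ∀ a c : ℕ, a ≤ M → a < c → stmt6k M v V a c = 0 := by
    intro a c h1 h2; unfold stmt6k; rw [if_pos h1, if_neg (by omega)]
  have hEig := stmt6_eig M hM b d lam v V hv0 hV0 hVs hrec hP4 hd0
  by_cases hxM : x ≤ M
  · by_cases hxlt : x + 1 ≤ M
    -- Case D : x ≤ M - 1
    · have hx1N : x + 1 ≤ N := by omega
      have hxN : x < N := by omega
      have hb' : stmt6b' M lam b v V (x+1)
          = v x * b (x+1) * V (x+1) / (v (x+1) * V x) := by
        unfold stmt6b'; rw [if_pos hxlt, Nat.add_sub_cancel]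
      have hvx := hvpos x (by omega)
      have hvx1 := hvpos (x+1) hxlt
      have hVx := hVpos x (by omega)
      have hVx1 := hVpos (x+1) hxlt
      have hrecx := hrec x hxlt
      have hVsx := hVs x
      rw [if_pos hx1N, if_pos hxN, hb']
      by_cases hy1 : y = x + 1
      · subst hy1
        rw [if_pos (show 1 ≤ x + 1 by omega), Nat.add_sub_cancel,
          hkle x x hxM le_rfl, hkgt x (x+1+1) hxM (by omega), hkgt x (x+1) hxM (by omega),
          hkle (x+1) (x+1) hxlt le_rfl, hkgt (x-1) (x+1) (by omega) (by omega),
          if_pos (show x+1+1 ≤ N by omega)]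
        simp only [mul_zero, zero_mul, add_zero, zero_add, ite_self]
        field_simp
      · by_cases hy2 : y = x
        · subst hy2
          rw [hkle y (y-1) hxM (by omega), hkle y y hxM le_rfl, hkgt y (y+1) hxM (by omega),
            hkle (y+1) y hxlt (by omega), if_pos (show y + 1 ≤ N by omega),
            if_pos (show y < N by omega)]
          rcases Nat.eq_zero_or_pos y with rfl | hx1
          · have hd'0 : stmt6d' M d v V 0 = 0 := by unfold stmt6d'; rw [if_neg (by omega)]
            rw [if_neg (show ¬ (1:ℕ) ≤ 0 by omega), if_neg (show ¬ (1:ℕ) ≤ 0 by omega),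
              hd'0, hd0, hv0, hV0]
            simp only [mul_zero, zero_mul, add_zero, zero_add, ite_self, one_mul, mul_one]
            rw [hVs 0, hV0]
            have hv1 := hvpos (0+1) (by omega)
            have h1 : (1:ℝ) + v (0+1) ≠ 0 := by linarith
            field_simp
            ring
          · obtain ⟨n, rfl⟩ : ∃ n, y = n + 1 := ⟨y - 1, by omega⟩
            have hd' : stmt6d' M d v V (n+1)
                = V n * v (n+1+1) * d (n+1+1) / (v (n+1) * V (n+1)) := by
              unfold stmt6d'
              rw [if_pos ⟨by omega, by omega⟩, Nat.add_sub_cancel]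
            rw [if_pos (show 1 ≤ n + 1 by omega), Nat.add_sub_cancel,
              hkgt n (n+1) (by omega) (by omega), hd']
            simp only [mul_zero, zero_mul, add_zero, zero_add, ite_self]
            have hrecn := hrec n (by omega)
            have hVn := hVpos n (by omega)
            have hvn := hvpos n (by omega)
            -- substitute V (n+1+1) and V (n+1)
            rw [hVs (n+1)]
            rw [hVs n] at hrecx ⊢
            have h1 : V n + v (n+1) ≠ 0 := by linarith
            have h2 : V n + v (n+1) + v (n+1+1) ≠ 0 := by linarith
            trans (v n * b (n+1) - v (n+1) * b (n+1+1) - v (n+1) * d (n+1))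
              / (V n + v (n+1))
            · field_simp
              ring
            trans (-(v (n+1) * v (n+1) * b (n+1+1)) - V n * v (n+1+1) * d (n+1+1))
              / ((V n + v (n+1)) * (V n + v (n+1)))
            · rw [div_eq_div_iff h1 (by positivity)]
              linear_combination (V n + v (n+1)) * V n * hrecx
                - (V n + v (n+1)) * (V n + v (n+1)) * hrecn
            · field_simp
              ring
        · by_cases hy3 : y < x
          · have hx1 : 1 ≤ x := by omega
            obtain ⟨n, rfl⟩ : ∃ n, x = n + 1 := ⟨x - 1, by omega⟩
            have hd' : stmt6d' M d v V (n+1)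
                = V n * v (n+1+1) * d (n+1+1) / (v (n+1) * V (n+1)) := by
              unfold stmt6d'
              rw [if_pos ⟨by omega, by omega⟩, Nat.add_sub_cancel]
            rw [hkle (n+1) (y-1) hxM (by omega), hkle (n+1) (y+1) hxM (by omega),
              hkle (n+1) y hxM (by omega), hkle (n+1+1) y hxlt (by omega),
              if_pos (show 1 ≤ n + 1 by omega), Nat.add_sub_cancel,
              hkle n y (by omega) (by omega), hd',
              if_pos (show y + 1 ≤ N by omega), if_pos (show y < N by omega)]
            have hrecn := hrec n (by omega)
            have hVn := hVpos n (by omega)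
            have hvn := hvpos n (by omega)
            have hE := hEig y (by omega)
            rw [if_pos (show y + 1 ≤ M by omega)] at hE
            have hvy := hvpos y (by omega)
            rw [hVs (n+1)]
            rw [hVs n] at hrecx ⊢
            have h1 : V n + v (n+1) ≠ 0 := by linarith
            have h2 : V n + v (n+1) + v (n+1+1) ≠ 0 := by linarith
            by_cases hy0 : 1 ≤ y
            · rw [if_pos hy0]
              rw [if_pos hy0] at hE
              trans (v (y-1) * b y + v (y+1) * d (y+1) - v y * (b (y+1) + d y))
                / (V n + v (n+1))
              · field_simp
                ring
              trans ((v (n+1+1) * d (n+1+1) - v (n+1) * b (n+1+1)) * v y)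
                / ((V n + v (n+1)) * (V n + v (n+1)))
              · rw [div_eq_div_iff h1 (by positivity)]
                linear_combination ((V n + v (n+1)) * (V n + v (n+1))) * hE
                  - ((V n + v (n+1)) * v y) * hrecx
              · field_simp
                ring
            · rw [if_neg hy0]
              rw [if_neg hy0] at hE
              trans (v (y+1) * d (y+1) - v y * (b (y+1) + d y))
                / (V n + v (n+1))
              · field_simp
                ring
              trans ((v (n+1+1) * d (n+1+1) - v (n+1) * b (n+1+1)) * v y)
                / ((V n + v (n+1)) * (V n + v (n+1)))
              · rw [div_eq_div_iff h1 (by positivity)]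
                linear_combination ((V n + v (n+1)) * (V n + v (n+1))) * hE
                  - ((V n + v (n+1)) * v y) * hrecx
              · field_simp
                ring
          · have h1 : x + 2 ≤ y := by omega
            rw [hkgt x (y-1) hxM (by omega), hkgt x (y+1) hxM (by omega),
              hkgt x y hxM (by omega), hkgt (x+1) y hxlt (by omega),
              hkgt (x-1) y (by omega) (by omega)]
            simp only [mul_zero, zero_mul, add_zero, zero_add, ite_self]
    -- Case C : x = M
    · have hxE : x = M := by omega
      subst hxE
      -- note: `subst` eliminates M, everything is now in terms of x
      have hb'M : stmt6b' x lam b v V (x+1) = lam := by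
        unfold stmt6b'; rw [if_neg (by omega), if_pos rfl]
      have hd'M : stmt6d' x d v V x = 0 := by
        unfold stmt6d'; rw [if_neg (by omega)]
      have hVM := hVpos x le_rfl
      rw [if_pos (show x + 1 ≤ N from hMN), if_pos (show x < N by omega), hb'M, hd'M]
      by_cases hy1 : y = x + 1
      · subst hy1
        have hk1 : stmt6k x v V (x+1) (x+1) = 1 := by
          unfold stmt6k; rw [if_neg (by omega), if_pos rfl]
        rw [if_pos (show 1 ≤ x + 1 by omega), Nat.add_sub_cancel,
          hkle x x le_rfl le_rfl, hkgt x (x+1) le_rfl (by omega), hk1]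
        have h2 : (if x + 1 + 1 ≤ N then stmt6k x v V x (x+1+1) * d (x+1+1) else 0) = 0 := by
          split_ifs with h
          · rw [hkgt x (x+1+1) le_rfl (by omega)]; ring
          · rfl
        rw [h2]
        simp only [mul_zero, zero_mul, add_zero, zero_add, mul_one, ite_self]
        rw [div_mul_eq_mul_div, div_eq_iff (ne_of_gt hVM)]
        linear_combination hP4
      · by_cases hy2 : y ≤ x
        · have hk0 : stmt6k x v V (x+1) y = 0 := by
            unfold stmt6k; rw [if_neg (by omega), if_neg (by omega)]
          rw [hkle x (y-1) le_rfl (by omega), hkle x y le_rfl hy2, hk0,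
            if_pos (show y + 1 ≤ N by omega), if_pos (show y < N by omega),
            if_pos hM]
          have hE := hEig y hy2
          have hvy := hvpos y hy2
          by_cases hy3 : y + 1 ≤ x
          · rw [hkle x (y+1) le_rfl hy3]
            rw [if_pos hy3] at hE
            by_cases hy0 : 1 ≤ y
            · rw [if_pos hy0]; rw [if_pos hy0] at hE
              simp only [mul_zero, zero_mul, add_zero, zero_add, ite_self]
              trans ((v (y-1) * b y + v (y+1) * d (y+1) - v y * (b (y+1) + d y)) / V x)
              · field_simp
                ring
              trans (-(lam * v y) / V x)
              · rw [div_eq_div_iff (ne_of_gt hVM) (ne_of_gt hVM)]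
                linear_combination (V x) * hE
              · field_simp
            · rw [if_neg hy0]; rw [if_neg hy0] at hE
              simp only [mul_zero, zero_mul, add_zero, zero_add, ite_self]
              trans ((v (y+1) * d (y+1) - v y * (b (y+1) + d y)) / V x)
              · field_simp
                ring
              trans (-(lam * v y) / V x)
              · rw [div_eq_div_iff (ne_of_gt hVM) (ne_of_gt hVM)]
                linear_combination (V x) * hE
              · field_simp
          · have hyx : y = x := by omega
            rw [hkgt x (y+1) le_rfl (by omega)]
            rw [if_neg hy3] at hE
            have hy0 : 1 ≤ y := by omega
            rw [if_pos hy0]; rw [if_pos hy0] at hE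
            simp only [mul_zero, zero_mul, add_zero, zero_add, ite_self]
            trans ((v (y-1) * b y - v y * (b (y+1) + d y)) / V x)
            · field_simp
              ring
            trans (-(lam * v y) / V x)
            · rw [div_eq_div_iff (ne_of_gt hVM) (ne_of_gt hVM)]
              linear_combination (V x) * hE
            · field_simp
        · have h1 : x + 2 ≤ y := by omega
          have hk0 : stmt6k x v V (x+1) y = 0 := by
            unfold stmt6k; rw [if_neg (by omega), if_neg (by omega)]
          rw [hkgt x (y-1) le_rfl (by omega), hkgt x (y+1) le_rfl (by omega),
            hkgt x y le_rfl (by omega), hk0]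
          simp only [mul_zero, zero_mul, add_zero, zero_add, ite_self]
  -- Case A/B : x ≥ M + 1
  · have hxge : M + 1 ≤ x := by omega
    have hd'x : stmt6d' M d v V x = 0 := by unfold stmt6d'; rw [if_neg (by omega)]
    have hb'x : stmt6b' M lam b v V (x+1) = b (x+1) := by
      unfold stmt6b'; rw [if_neg (by omega), if_neg (by omega)]
    have hkxx : ∀ c, stmt6k M v V x c = if c = x then 1 else 0 := by
      intro c; unfold stmt6k; rw [if_neg (by omega)]
    have hkx1 : ∀ c, stmt6k M v V (x+1) c = if c = x + 1 then 1 else 0 := by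
      intro c; unfold stmt6k; rw [if_neg (by omega)]
    rw [hd'x, hb'x, hkxx (y-1), hkxx (y+1), hkxx y, hkx1 y]
    have e5 : (if 1 ≤ x then (0:ℝ) * stmt6k M v V (x-1) y else 0) = 0 := by
      split_ifs <;> ring
    rw [e5]
    by_cases hy1 : y = x + 1
    · subst hy1
      rw [if_pos (show 1 ≤ x + 1 by omega), Nat.add_sub_cancel,
        if_pos (show x + 1 ≤ N from hy), if_pos rfl,
        if_neg (show ¬ x + 1 + 1 = x by omega), if_neg (show ¬ x + 1 = x by omega),
        if_pos rfl]
      have h2 : (if x + 1 + 1 ≤ N then (0:ℝ) * d (x+1+1) else 0) = 0 := by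
        split_ifs <;> ring
      rw [h2]
      ring
    · by_cases hy2 : y = x
      · subst hy2
        rw [if_pos rfl, if_neg (show ¬ y + 1 = y by omega), if_neg (show ¬ y = y + 1 by omega),
          hdz y (by omega)]
        have h1 : (if 1 ≤ y then (if y - 1 = y then (1:ℝ) else 0) * b y else 0) = 0 := by
          split_ifs with h h2
          · exact absurd h2 (by omega)
          · ring
          · rfl
        rw [h1]
        simp only [mul_zero, zero_mul, add_zero, zero_add, ite_self, one_mul, mul_one]
        try ring
      · have e1 : (if 1 ≤ y then (if y - 1 = x then (1:ℝ) else 0) * b y else 0) = 0 := by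
          by_cases h : 1 ≤ y
          · rw [if_pos h, if_neg (show ¬ y - 1 = x by omega), zero_mul]
          · rw [if_neg h]
        have e2 : (if y + 1 ≤ N then (if y + 1 = x then (1:ℝ) else 0) * d (y+1) else 0) = 0 := by
          by_cases h : y + 1 ≤ N
          · by_cases h2 : y + 1 = x
            · rw [if_pos h, if_pos h2, h2, hdz x (by omega)]
              ring
            · rw [if_pos h, if_neg h2, zero_mul]
          · rw [if_neg h]
        have e3 : (if y = x then (1:ℝ) else 0) = 0 := by rw [if_neg hy2]
        have e4 : (if x + 1 ≤ N then b (x+1) * (if y = x + 1 then (1:ℝ) else 0) else 0) = 0 := by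
          by_cases h : x + 1 ≤ N
          · rw [if_pos h, if_neg hy1, mul_zero]
          · rw [if_neg h]
        rw [e1, e2, e3, e4]
        ring


/-- Inductive step for the fast process: there exist a stochastic matrix `K`
supported on `{0,...,x}` at `x`, with `K(x,x) = 1` for `x ≥ M+1`, and a
birth-and-death generator `G'` with positive birth rates, death rates positive
up to `M-1` and zero from `M` on, such that `KG = G'K`. -/
theorem stmt6 (N M : ℕ) (hM : 1 ≤ M) (hMN : M + 1 ≤ N) (b d : ℕ → ℝ)
    (hb : ∀ x, 1 ≤ x → x ≤ N → 0 < b x)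
    (hd : ∀ x, 1 ≤ x → x ≤ M → 0 < d x)
    (hdz : ∀ x, M + 1 ≤ x → d x = 0) (hd0 : d 0 = 0) :
    ∃ (K : Matrix (Fin (N+1)) (Fin (N+1)) ℝ) (b' d' : ℕ → ℝ),
      (∀ x y, 0 ≤ K x y) ∧ (∀ x, ∑ y, K x y = 1) ∧
      (∀ x : Fin (N+1), ∑ y ∈ Finset.univ.filter (fun y => y ≤ x), K x y = 1) ∧
      (∀ x : Fin (N+1), M + 1 ≤ (x : ℕ) → K x x = 1) ∧
      (∀ x, 1 ≤ x → x ≤ N → 0 < b' x) ∧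
      (∀ x, 1 ≤ x → x ≤ M - 1 → 0 < d' x) ∧
      (∀ x, M ≤ x → d' x = 0) ∧ d' 0 = 0 ∧
      K * bdGen N b d = bdGen N b' d' * K := by
  obtain ⟨lam, hlam, hvpos, hP4⟩ :=
    stmt6_exists_lam M hM b d (fun x h1 h2 => hb x h1 (by omega)) hd
  have hv0 : stmt6v b d lam 0 = 1 := stmt6v_zero b d lam
  have hV0 : stmt6V b d lam 0 = 1 := stmt6V_zero b d lam
  have hVs : ∀ x, stmt6V b d lam (x+1) = stmt6V b d lam x + stmt6v b d lam (x+1) :=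
    stmt6V_succ b d lam
  have hrec : ∀ x, x + 1 ≤ M → stmt6v b d lam (x+1) * d (x+1)
      = stmt6v b d lam x * b (x+1) - lam * stmt6V b d lam x := by
    intro x hxM
    rw [stmt6v_succ]
    exact div_mul_cancel₀ _ (ne_of_gt (hd _ (by omega) hxM))
  have hVpos : ∀ x, x ≤ M → 0 < stmt6V b d lam x := by
    intro x
    induction x with
    | zero => intro _; rw [hV0]; norm_num
    | succ n ih =>
      intro h
      rw [hVs n]
      have h1 := ih (by omega)
      have h2 := hvpos (n+1) h
      linarith
  have hVsum : ∀ n, stmt6V b d lam n = ∑ i ∈ Finset.range (n+1), stmt6v b d lam i := by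
    intro n
    induction n with
    | zero => rw [hV0, Finset.sum_range_one, hv0]
    | succ m ih => rw [Finset.sum_range_succ, ← ih, hVs m]
  set v : ℕ → ℝ := stmt6v b d lam with hvdef
  set V : ℕ → ℝ := stmt6V b d lam with hVdef
  refine ⟨Matrix.of (fun x y : Fin (N+1) => stmt6k M v V (x : ℕ) (y : ℕ)),
    stmt6b' M lam b v V, stmt6d' M d v V, ?_, ?_, ?_, ?_, ?_, ?_, ?_, ?_, ?_⟩
  -- nonnegativity
  case _ =>
    intro x y
    simp only [Matrix.of_apply]
    unfold stmt6k
    split_ifs with h1 h2 h3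
    · exact le_of_lt (div_pos (hvpos _ (by omega)) (hVpos _ h1))
    · exact le_rfl
    · exact zero_le_one
    · exact le_rfl
  -- row sums
  case _ =>
    have hrowsum : ∀ x : ℕ, x ≤ N → ∑ i ∈ Finset.range (N+1), stmt6k M v V x i = 1 := by
      intro x hx
      by_cases hxM : x ≤ M
      · have hsub : Finset.range (x+1) ⊆ Finset.range (N+1) := by
          intro i hi; simp only [Finset.mem_range] at *; omega
        have hzero : ∀ i ∈ Finset.range (N+1), i ∉ Finset.range (x+1) → stmt6k M v V x i = 0 := by
          intro i _ hi
          simp only [Finset.mem_range] at hi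
          unfold stmt6k
          rw [if_pos hxM, if_neg (by omega)]
        rw [← Finset.sum_subset hsub hzero]
        have hval : ∀ i ∈ Finset.range (x+1), stmt6k M v V x i = v i / V x := by
          intro i hi
          simp only [Finset.mem_range] at hi
          unfold stmt6k
          rw [if_pos hxM, if_pos (by omega)]
        rw [Finset.sum_congr rfl hval, ← Finset.sum_div, ← hVsum x,
          div_self (ne_of_gt (hVpos x hxM))]
      · have hval : ∀ i, stmt6k M v V x i = if i = x then 1 else 0 := by
          intro i; unfold stmt6k; rw [if_neg hxM]
        rw [Finset.sum_congr rfl (fun i _ => hval i),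
          Finset.sum_ite_eq' (Finset.range (N+1)) x (fun _ => (1:ℝ)),
          if_pos (by simp only [Finset.mem_range]; omega)]
    intro x
    simp only [Matrix.of_apply]
    rw [Fin.sum_univ_eq_sum_range (fun i => stmt6k M v V (x : ℕ) i) (N+1)]
    exact hrowsum x (by omega)
  -- filtered row sums
  case _ =>
    have hrowsum : ∀ x : ℕ, x ≤ N → ∑ i ∈ Finset.range (N+1), stmt6k M v V x i = 1 := by
      intro x hx
      by_cases hxM : x ≤ M
      · have hsub : Finset.range (x+1) ⊆ Finset.range (N+1) := by
          intro i hi; simp only [Finset.mem_range] at *; omega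
        have hzero : ∀ i ∈ Finset.range (N+1), i ∉ Finset.range (x+1) → stmt6k M v V x i = 0 := by
          intro i _ hi
          simp only [Finset.mem_range] at hi
          unfold stmt6k
          rw [if_pos hxM, if_neg (by omega)]
        rw [← Finset.sum_subset hsub hzero]
        have hval : ∀ i ∈ Finset.range (x+1), stmt6k M v V x i = v i / V x := by
          intro i hi
          simp only [Finset.mem_range] at hi
          unfold stmt6k
          rw [if_pos hxM, if_pos (by omega)]
        rw [Finset.sum_congr rfl hval, ← Finset.sum_div, ← hVsum x,
          div_self (ne_of_gt (hVpos x hxM))]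
      · have hval : ∀ i, stmt6k M v V x i = if i = x then 1 else 0 := by
          intro i; unfold stmt6k; rw [if_neg hxM]
        rw [Finset.sum_congr rfl (fun i _ => hval i),
          Finset.sum_ite_eq' (Finset.range (N+1)) x (fun _ => (1:ℝ)),
          if_pos (by simp only [Finset.mem_range]; omega)]
    intro x
    have hfull : ∑ y ∈ Finset.univ.filter (fun y : Fin (N+1) => y ≤ x), stmt6k M v V (x:ℕ) (y:ℕ)
        = ∑ y : Fin (N+1), stmt6k M v V (x:ℕ) (y:ℕ) := by
      apply Finset.sum_subset (Finset.filter_subset _ _)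
      intro y _ hy
      have hyx : ¬ ((y : ℕ) ≤ (x : ℕ)) := by
        intro hc
        exact hy (Finset.mem_filter.2 ⟨Finset.mem_univ y, Fin.le_def.2 hc⟩)
      unfold stmt6k
      by_cases h1 : (x : ℕ) ≤ M
      · rw [if_pos h1, if_neg hyx]
      · rw [if_neg h1, if_neg (show ¬ (y:ℕ) = (x:ℕ) by omega)]
    simp only [Matrix.of_apply]
    rw [hfull, Fin.sum_univ_eq_sum_range (fun i => stmt6k M v V (x : ℕ) i) (N+1)]
    exact hrowsum x (by omega)
  -- identity rows above M
  case _ =>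
    intro x hx
    simp only [Matrix.of_apply]
    unfold stmt6k
    rw [if_neg (by omega), if_pos rfl]
  -- positivity of b'
  case _ =>
    intro z h1 h2
    unfold stmt6b'
    split_ifs with ha hb'
    · exact div_pos
        (mul_pos (mul_pos (hvpos (z-1) (by omega)) (hb z h1 h2)) (hVpos z ha))
        (mul_pos (hvpos z ha) (hVpos (z-1) (by omega)))
    · exact hlam
    · exact hb z h1 h2
  -- positivity of d'
  case _ =>
    intro z h1 h2
    unfold stmt6d'
    rw [if_pos ⟨h1, by omega⟩]
    exact div_pos
      (mul_pos (mul_pos (hVpos (z-1) (by omega)) (hvpos (z+1) (by omega)))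
        (hd (z+1) (by omega) (by omega)))
      (mul_pos (hvpos z (by omega)) (hVpos z (by omega)))
  -- vanishing of d' above M
  case _ =>
    intro z hz
    unfold stmt6d'
    rw [if_neg (by omega)]
  -- d' 0 = 0
  case _ =>
    unfold stmt6d'
    rw [if_neg (by omega)]
  -- the intertwining relation
  case _ =>
    ext x y
    rw [Matrix.mul_apply, Matrix.mul_apply]
    have hL : ∀ z : Fin (N+1),
        (Matrix.of (fun x y : Fin (N+1) => stmt6k M v V (x : ℕ) (y : ℕ))) x z * bdGen N b d z y
        = (fun i => stmt6k M v V (x : ℕ) i * stmt6g N b d i (y : ℕ)) (z : ℕ) := by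
      intro z
      rw [bdGen_eq]
      rfl
    have hR : ∀ z : Fin (N+1),
        bdGen N (stmt6b' M lam b v V) (stmt6d' M d v V) x z
          * (Matrix.of (fun x y : Fin (N+1) => stmt6k M v V (x : ℕ) (y : ℕ))) z y
        = (fun i => stmt6g N (stmt6b' M lam b v V) (stmt6d' M d v V) (x : ℕ) i
            * stmt6k M v V i (y : ℕ)) (z : ℕ) := by
      intro z
      rw [bdGen_eq]
      rfl
    rw [Finset.sum_congr rfl (fun z _ => hL z), Finset.sum_congr rfl (fun z _ => hR z)]
    refine Eq.trans (Fin.sum_univ_eq_sum_range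
        (fun i => stmt6k M v V (x:ℕ) i * stmt6g N b d i (y:ℕ)) (N+1))
      (Eq.trans ?_ (Fin.sum_univ_eq_sum_range
        (fun i => stmt6g N (stmt6b' M lam b v V) (stmt6d' M d v V) (x:ℕ) i
          * stmt6k M v V i (y:ℕ)) (N+1)).symm)
    rw [stmt6g_row_sum N b d _ (y : ℕ) (by omega),
      stmt6g_col_sum N (stmt6b' M lam b v V) (stmt6d' M d v V) _ (x : ℕ) (by omega)]
    exact stmt6_key N M hM hMN b d lam v V hv0 hV0 hVs hrec hP4 hvpos hVpos hdz hd0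
      (x : ℕ) (y : ℕ) (by omega) (by omega)
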